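/- Let k be an algebraically closed field and let u0, …, uN be homogeneous polynomials in k[X,Y] with deg(u_i) = n·λ_i for positive integers n and λ_0,…,λ_N. Suppose the associated rational map to weighted projective space is constant, i.e., for all points p, q of P^1 at which not all u_i vanish and all indices i, j, we have u_i(p)^{λ_j}·u_j(q)^{λ_i} = u_j(p)^{λ_i}·u_i(q)^{λ_j}. Let I be the set of indices with u_i ≠ 0 and ℓ = gcd(λ_i : i ∈ I). Then there exist scalars a_i ∈ k and a homogeneous polynomial U of degree ℓ·n such that u_i = a_i·U^{λ_i/ℓ} for all i ∈ I. -/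

import Mathlib

open MvPolynomial

noncomputable section Aux

variable {R : Type*} {σ : Type*}

/-- The "expansion" map sending a multivariate polynomial `f` to
`∑ d, (homogeneousComponent d f) * t^d` in `(MvPolynomial σ R)[t]`. -/
def homExpand [CommSemiring R] : MvPolynomial σ R →+* Polynomial (MvPolynomial σ R) :=
  MvPolynomial.eval₂Hom (Polynomial.C.comp MvPolynomial.C)
    (fun i => Polynomial.C (MvPolynomial.X i) * Polynomial.X)

lemma homExpand_monomial [CommSemiring R] (d : σ →₀ ℕ) (c : R) :
    homExpand (monomial d c) =
      Polynomial.C (monomial d c) * Polynomial.X ^ (d.degree) := by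
  classical
  rw [homExpand, eval₂Hom_monomial]
  simp only [RingHom.coe_comp, Function.comp_apply]
  rw [monomial_eq, Finsupp.prod, Finsupp.prod, Finsupp.degree_apply]
  simp only [mul_pow, Finset.prod_mul_distrib, ← Polynomial.C_pow, ← map_prod,
    Finset.prod_pow_eq_pow_sum, map_mul]
  ring

lemma coeff_homExpand [CommSemiring R] (f : MvPolynomial σ R) (j : ℕ) :
    (homExpand f).coeff j = homogeneousComponent j f := by
  classical
  conv_lhs => rw [f.as_sum]
  rw [map_sum, Polynomial.finset_sum_coeff, homogeneousComponent_apply,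
    Finset.sum_filter]
  apply Finset.sum_congr rfl
  intro d _
  rw [homExpand_monomial, Polynomial.coeff_C_mul, Polynomial.coeff_X_pow]
  by_cases h : d.degree = j
  · simp [h]
  · simp [h, Ne.symm h]

end Aux

noncomputable section Aux2

variable {R : Type*} {σ : Type*}

lemma homExpand_eval_one [CommSemiring R] (f : MvPolynomial σ R) :
    Polynomial.eval 1 (homExpand f) = f := by
  have : (Polynomial.evalRingHom (1 : MvPolynomial σ R)).comp
      (homExpand (R := R) (σ := σ)) = RingHom.id _ := by
    apply MvPolynomial.ringHom_ext
    · intro r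
      simp [homExpand]
    · intro i
      simp [homExpand]
  exact congrArg (fun g => g f) (congrArg DFunLike.coe this)

lemma homExpand_ne_zero [CommSemiring R] {f : MvPolynomial σ R} (hf : f ≠ 0) :
    homExpand f ≠ 0 := fun h => hf (by rw [← homExpand_eval_one f, h, Polynomial.eval_zero])

lemma homExpand_of_isHomogeneous [CommSemiring R] {f : MvPolynomial σ R} {M : ℕ}
    (hf : f.IsHomogeneous M) :
    homExpand f = Polynomial.C f * Polynomial.X ^ M := by
  ext j
  rw [coeff_homExpand, Polynomial.coeff_C_mul, Polynomial.coeff_X_pow,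
    homogeneousComponent_of_mem (by exact hf : f ∈ homogeneousSubmodule σ R M)]
  by_cases h : j = M
  · simp [h]
  · simp [h]

/-- A factor of a nonzero homogeneous polynomial is homogeneous. -/
lemma isHomogeneous_of_mul_isHomogeneous [CommRing R] [IsDomain R]
    {f g : MvPolynomial σ R} {M : ℕ} (hf : f ≠ 0) (hg : g ≠ 0)
    (h : (f * g).IsHomogeneous M) : ∃ a, f.IsHomogeneous a := by
  classical
  have hfg : f * g ≠ 0 := mul_ne_zero hf hg
  have hx : homExpand f * homExpand g = Polynomial.C (f * g) * Polynomial.X ^ M := by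
    rw [← map_mul, homExpand_of_isHomogeneous h]
  have hF := homExpand_ne_zero hf
  have hG := homExpand_ne_zero hg
  have hnd : (homExpand f).natDegree + (homExpand g).natDegree = M := by
    have := congrArg Polynomial.natDegree hx
    rwa [Polynomial.natDegree_mul hF hG, Polynomial.natDegree_C_mul_X_pow M _ hfg] at this
  have hnt : (homExpand f).natTrailingDegree + (homExpand g).natTrailingDegree = M := by
    have := congrArg Polynomial.natTrailingDegree hx
    rwa [Polynomial.natTrailingDegree_mul hF hG, Polynomial.natTrailingDegree_mul
        (fun h' => hfg (by simpa using congrArg (Polynomial.coeff · 0) h'))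
        (pow_ne_zero _ Polynomial.X_ne_zero),
      Polynomial.natTrailingDegree_C, Polynomial.natTrailingDegree_X_pow, zero_add] at this
  set e := (homExpand f).natDegree with he
  have heq : (homExpand f).natTrailingDegree = e := by
    have h1 := Polynomial.natTrailingDegree_le_natDegree (homExpand f)
    have h2 := Polynomial.natTrailingDegree_le_natDegree (homExpand g)
    omega
  have hzero : ∀ j, j ≠ e → homogeneousComponent j f = 0 := by
    intro j hj
    rw [← coeff_homExpand]
    rcases lt_or_gt_of_ne hj with hlt | hgt
    · exact Polynomial.coeff_eq_zero_of_lt_natTrailingDegree (by omega)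
    · exact Polynomial.coeff_eq_zero_of_natDegree_lt (by omega)
  have hfe : f = homogeneousComponent e f := by
    conv_lhs => rw [← sum_homogeneousComponent f]
    rw [Finset.sum_eq_single e (fun b _ hb => hzero b hb)
      (fun _ => homogeneousComponent_eq_zero _ f (by
        by_contra hcon
        push_neg at hcon
        exact ‹e ∉ Finset.range (f.totalDegree + 1)› (Finset.mem_range.mpr (by omega))))]
  exact ⟨e, hfe ▸ homogeneousComponent_isHomogeneous e f⟩

end Aux2

noncomputable section Aux3

variable {R : Type*} {σ : Type*}

lemma isHomogeneous_of_pow_isHomogeneous [CommRing R] [IsDomain R]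
    {V : MvPolynomial σ R} {m M : ℕ} (hV : V ≠ 0) (hm : 0 < m)
    (h : (V ^ m).IsHomogeneous M) : ∃ e, V.IsHomogeneous e ∧ e * m = M := by
  obtain ⟨m, rfl⟩ := Nat.exists_eq_succ_of_ne_zero hm.ne'
  have h' : (V * V ^ m).IsHomogeneous M := by rwa [Nat.succ_eq_add_one, pow_succ'] at h
  obtain ⟨e, heV⟩ := isHomogeneous_of_mul_isHomogeneous hV (pow_ne_zero _ hV) h'
  refine ⟨e, heV, ?_⟩
  exact (heV.pow (m + 1)).inj_right h (pow_ne_zero _ hV)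

/-- A unit in a multivariate polynomial ring over a domain is a constant. -/
lemma eq_C_of_isUnit [CommRing R] [IsDomain R] {w : MvPolynomial σ R}
    (hw : IsUnit w) : ∃ a : R, a ≠ 0 ∧ w = MvPolynomial.C a := by
  classical
  obtain ⟨v, hv⟩ := hw.exists_right_inv
  have hw0 : w ≠ 0 := fun h => by simp [h] at hv
  have hv0 : v ≠ 0 := fun h => by simp [h] at hv
  have h1 : (w * v).IsHomogeneous 0 := hv ▸ isHomogeneous_one σ R
  obtain ⟨b, hb⟩ := isHomogeneous_of_mul_isHomogeneous hw0 hv0 h1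
  obtain ⟨c, hc⟩ := isHomogeneous_of_mul_isHomogeneous hv0 hw0 (by rwa [mul_comm])
  have hb0 : b = 0 := by
    have := (hb.mul hc).inj_right h1 (mul_ne_zero hw0 hv0)
    omega
  subst hb0
  have htd : w.totalDegree = 0 := (totalDegree_zero_iff_isHomogeneous σ).mpr hb
  rw [totalDegree_eq_zero_iff] at htd
  refine ⟨coeff 0 w, ?_, ?_⟩
  · intro h0
    apply hw0
    ext d
    rw [coeff_zero]
    by_cases hd : d = 0
    · rw [hd]; exact h0
    · by_contra hcd
      have hds : d ∈ w.support := by rwa [mem_support_iff]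
      exact hd (Finsupp.ext fun x => htd d hds x)
  · ext d
    rw [coeff_C]
    by_cases hd : d = 0
    · simp [hd, eq_comm]
    · rw [if_neg (Ne.symm hd)]
      by_contra hcd
      have hds : d ∈ w.support := by rwa [mem_support_iff]
      exact hd (Finsupp.ext fun x => htd d hds x)

end Aux3

open scoped Classical in
/-- if the rational map `ℙ¹ ⇢ 𝒫(λ)` defined by a tuple of homogeneous
polynomials `u_i` of degrees `n·λ_i` is constant, then `u_i = a_i · U^(λ_i/ℓ)` for some
scalars `a_i` and a homogeneous polynomial `U` of degree `ℓ·n`, where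
`ℓ = gcd(λ_i : u_i ≠ 0)`. -/
theorem stmt1 {k : Type*} [Field k] [IsAlgClosed k] (N n : ℕ) (hn : 0 < n)
    (lam : Fin (N + 1) → ℕ) (hlam : ∀ i, 0 < lam i)
    (u : Fin (N + 1) → MvPolynomial (Fin 2) k)
    (hhom : ∀ i, (u i).IsHomogeneous (n * lam i))
    (hne : ∃ i, u i ≠ 0)
    (hconst : ∀ p q : Fin 2 → k, p ≠ 0 → q ≠ 0 →
      (∃ i, eval p (u i) ≠ 0) → (∃ i, eval q (u i) ≠ 0) →
      ∀ i j, eval p (u i) ^ lam j * eval q (u j) ^ lam i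
        = eval p (u j) ^ lam i * eval q (u i) ^ lam j) :
    ∃ (a : Fin (N + 1) → k) (U : MvPolynomial (Fin 2) k),
      U.IsHomogeneous ((Finset.univ.filter fun i => u i ≠ 0).gcd lam * n) ∧
      ∀ i, u i ≠ 0 →
        u i = C (a i) * U ^ (lam i / (Finset.univ.filter fun i => u i ≠ 0).gcd lam) := by
  classical
  set I : Finset (Fin (N + 1)) := Finset.univ.filter fun i => u i ≠ 0 with hIdef
  set ℓ : ℕ := I.gcd lam with hℓdef
  obtain ⟨i₀, hi₀⟩ := hne
  have hi₀I : i₀ ∈ I := by rw [hIdef]; simp [hi₀]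
  have hmemI : ∀ i ∈ I, u i ≠ 0 := by intro i hi; rw [hIdef] at hi; simpa using hi
  -- evaluation at 0 vanishes
  have heval0 : ∀ i, eval (0 : Fin 2 → k) (u i) = 0 := by
    intro i
    rw [eval_zero, constantCoeff_eq]
    exact (hhom i).coeff_eq_zero (by
      simp only [Finsupp.degree, Finsupp.support_zero, Finset.sum_empty]
      exact (Nat.mul_pos hn (hlam i)).ne)
  -- Step A: pairwise power-proportionality
  have hstepA : ∀ i ∈ I, ∀ j ∈ I, ∃ c : k, c ≠ 0 ∧ u i ^ lam j = C c * u j ^ lam i := by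
    intro i hi j hj
    have hui := hmemI i hi
    have huj := hmemI j hj
    have hq : ∃ q : Fin 2 → k, eval q (u i * u j) ≠ 0 := by
      by_contra h
      push_neg at h
      exact mul_ne_zero hui huj (MvPolynomial.funext fun x => by simpa using h x)
    obtain ⟨q, hq⟩ := hq
    rw [map_mul] at hq
    have ha : eval q (u i) ≠ 0 := left_ne_zero_of_mul hq
    have hb : eval q (u j) ≠ 0 := right_ne_zero_of_mul hq
    have hq0 : q ≠ 0 := fun h => ha (h ▸ heval0 i)
    have key : u i ^ lam j * C (eval q (u j) ^ lam i)
        = u j ^ lam i * C (eval q (u i) ^ lam j) := by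
      apply MvPolynomial.funext
      intro p
      simp only [map_mul, map_pow, eval_C]
      by_cases hp0 : p = 0
      · subst hp0
        rw [heval0 i, heval0 j, zero_pow (hlam j).ne', zero_pow (hlam i).ne',
          zero_mul, zero_mul]
      by_cases hex : ∃ i', eval p (u i') ≠ 0
      · exact hconst p q hp0 hq0 hex ⟨i, ha⟩ i j
      · push_neg at hex
        rw [hex i, hex j, zero_pow (hlam j).ne', zero_pow (hlam i).ne',
          zero_mul, zero_mul]
    have hbne : eval q (u j) ^ lam i ≠ 0 := pow_ne_zero _ hb
    refine ⟨eval q (u i) ^ lam j * (eval q (u j) ^ lam i)⁻¹,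
      mul_ne_zero (pow_ne_zero _ ha) (inv_ne_zero hbne), ?_⟩
    have := congrArg (fun z => C ((eval q (u j) ^ lam i)⁻¹) * z) key
    calc u i ^ lam j
        = C ((eval q (u j) ^ lam i)⁻¹) * (u i ^ lam j * C (eval q (u j) ^ lam i)) := by
          rw [mul_comm (u i ^ lam j), ← mul_assoc, ← C_mul, inv_mul_cancel₀ hbne, C_1, one_mul]
      _ = C ((eval q (u j) ^ lam i)⁻¹) * (u j ^ lam i * C (eval q (u i) ^ lam j)) := by rw [key]
      _ = C (eval q (u i) ^ lam j * (eval q (u j) ^ lam i)⁻¹) * u j ^ lam i := by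
          rw [C_mul]; ring
  -- basic numerology
  have hℓdvd : ∀ i ∈ I, ℓ ∣ lam i := fun i hi => Finset.gcd_dvd hi
  have hℓpos : 0 < ℓ := by
    rcases Nat.eq_zero_or_pos ℓ with h | h
    · exact absurd (Nat.eq_zero_of_zero_dvd (h ▸ hℓdvd i₀ hi₀I)) (hlam i₀).ne'
    · exact h
  set d : Fin (N + 1) → ℕ := fun i => lam i / ℓ with hddef
  have hld : ∀ i ∈ I, lam i = ℓ * d i := fun i hi => (Nat.mul_div_cancel' (hℓdvd i hi)).symm
  have hdpos : ∀ i ∈ I, 0 < d i := by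
    intro i hi
    rcases Nat.eq_zero_or_pos (d i) with h | h
    · exact absurd (by rw [hld i hi, h, mul_zero]) (hlam i).ne'
    · exact h
  have hgcdd : I.gcd d = 1 := by
    have h1 : I.gcd (fun i => ℓ * d i) = I.gcd lam :=
      Finset.gcd_congr rfl fun i hi => (hld i hi).symm
    have h2 : normalize ℓ * I.gcd d = ℓ := by rw [← Finset.gcd_mul_left, h1, ← hℓdef]
    rw [normalize_eq] at h2
    exact Nat.eq_of_mul_eq_mul_left hℓpos (h2.trans (mul_one ℓ).symm)
  -- factorization bookkeeping
  letI : NormalizationMonoid (MvPolynomial (Fin 2) k) :=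
    (UniqueFactorizationMonoid.normalizationMonoid :
      StrongNormalizationMonoid (MvPolynomial (Fin 2) k)).toNormalizationMonoid
  set F : Fin (N + 1) → Multiset (MvPolynomial (Fin 2) k) :=
    fun i => UniqueFactorizationMonoid.normalizedFactors (u i) with hFdef
  have hcount : ∀ i ∈ I, ∀ j ∈ I, ∀ p,
      lam j * (F i).count p = lam i * (F j).count p := by
    intro i hi j hj p
    obtain ⟨c, hc, hcu⟩ := hstepA i hi j hj
    have hCunit : IsUnit (C c : MvPolynomial (Fin 2) k) :=
      IsUnit.of_mul_eq_one (C c⁻¹) (by rw [← C_mul, mul_inv_cancel₀ hc, C_1])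
    have hassoc : Associated (u j ^ lam i) (u i ^ lam j) :=
      ⟨hCunit.unit, by rw [mul_comm, hcu, IsUnit.unit_spec]⟩
    have h2 := hassoc.normalizedFactors_eq
    rw [UniqueFactorizationMonoid.normalizedFactors_pow,
      UniqueFactorizationMonoid.normalizedFactors_pow] at h2
    have h3 := congrArg (Multiset.count p) h2.symm
    rwa [Multiset.count_nsmul, Multiset.count_nsmul] at h3
  have hdvdc : ∀ p, d i₀ ∣ (F i₀).count p := by
    intro p
    have h1 : ∀ j ∈ I, d i₀ ∣ d j * (F i₀).count p := by
      intro j hj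
      refine ⟨(F j).count p, ?_⟩
      have h := hcount i₀ hi₀I j hj p
      rw [hld j hj, hld i₀ hi₀I, mul_assoc, mul_assoc] at h
      exact Nat.eq_of_mul_eq_mul_left hℓpos h
    have h2 : d i₀ ∣ I.gcd (fun j => d j * (F i₀).count p) := Finset.dvd_gcd h1
    rwa [Finset.gcd_mul_right, hgcdd, one_mul, normalize_eq] at h2
  obtain ⟨G, hG⟩ := Multiset.exists_smul_of_dvd_count (F i₀) (fun p _ => hdvdc p)
  have hFi : ∀ i ∈ I, F i = d i • G := by
    intro i hi
    ext p
    rw [Multiset.count_nsmul]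
    have h := hcount i hi i₀ hi₀I p
    rw [hG, Multiset.count_nsmul, hld i₀ hi₀I, hld i hi] at h
    have h' : ℓ * d i₀ * (F i).count p = ℓ * d i₀ * (d i * G.count p) := by
      rw [h]; ring
    exact Nat.eq_of_mul_eq_mul_left (Nat.mul_pos hℓpos (hdpos i₀ hi₀I)) h'
  have hGsub : ∀ x ∈ G, x ∈ F i₀ := by
    intro x hx
    rw [hG, Multiset.mem_nsmul]
    exact ⟨(hdpos i₀ hi₀I).ne', hx⟩
  have hGirr : ∀ x ∈ G, Irreducible x := fun x hx =>
    UniqueFactorizationMonoid.irreducible_of_normalized_factor x (hGsub x hx)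
  set U : MvPolynomial (Fin 2) k := G.prod with hUdef
  have hU0 : U ≠ 0 := Multiset.prod_ne_zero fun h0 => (hGirr 0 h0).ne_zero rfl
  have hUfac : UniqueFactorizationMonoid.normalizedFactors U = G := by
    rw [hUdef, UniqueFactorizationMonoid.normalizedFactors_prod_eq G hGirr]
    rw [show G.map normalize = G.map id from Multiset.map_congr rfl fun x hx =>
      UniqueFactorizationMonoid.normalize_normalized_factor x (hGsub x hx), Multiset.map_id]
  have hassocU : ∀ i ∈ I, Associated (U ^ d i) (u i) := by
    intro i hi
    rw [UniqueFactorizationMonoid.associated_iff_normalizedFactors_eq_normalizedFactors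
      (pow_ne_zero _ hU0) (hmemI i hi),
      UniqueFactorizationMonoid.normalizedFactors_pow, hUfac]
    exact (hFi i hi).symm
  have hconsts : ∀ i ∈ I, ∃ a : k, a ≠ 0 ∧ u i = C a * U ^ d i := by
    intro i hi
    obtain ⟨w, hw⟩ := hassocU i hi
    obtain ⟨a, ha0, haC⟩ := eq_C_of_isUnit w.isUnit
    exact ⟨a, ha0, by rw [← hw, haC]; ring⟩
  -- homogeneity of U
  obtain ⟨a₀, ha₀0, ha₀⟩ := hconsts i₀ hi₀I
  have hUd : (U ^ d i₀).IsHomogeneous (n * lam i₀) := by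
    have : U ^ d i₀ = C a₀⁻¹ * u i₀ := by
      rw [ha₀, ← mul_assoc, ← C_mul, inv_mul_cancel₀ ha₀0, C_1, one_mul]
    rw [this]
    exact (hhom i₀).C_mul _
  obtain ⟨e, heU, hedeg⟩ := isHomogeneous_of_pow_isHomogeneous hU0 (hdpos i₀ hi₀I) hUd
  have he : e = ℓ * n := by
    have h1 : e * d i₀ = (ℓ * n) * d i₀ := by rw [hedeg, hld i₀ hi₀I]; ring
    exact Nat.eq_of_mul_eq_mul_right (hdpos i₀ hi₀I) h1
  -- final assembly
  choose! a ha0 hau using hconsts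
  refine ⟨a, U, by rw [he] at heU; exact heU, ?_⟩
  intro i hui
  have hi : i ∈ I := by rw [hIdef]; simp [hui]
  exact hau i hi
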